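/- Let Ξ ⊂ L·ℤ² with L sufficiently large, and let (g_i)_{ξ_i ∈ Ξ} be nonnegative reals. Then ∑_{j ∈ Ξ} ( ∑_{i ∈ Ξ, i ≠ j} g_i·θ(ξ_i − ξ_j) )² ≤ C·L^{-3}·∑_{i,k ∈ Ξ} g_i·g_k·θ(ξ_i − ξ_k) ≤ C'·L^{-3}·∑_{i ∈ Ξ} g_i², where θ(z) = (1+|z|)^{-3} and C, C' are independent of L and Ξ. -/

import Mathlib

set_option maxHeartbeats 1000000

noncomputable def theta (z : EuclideanSpace ℝ (Fin 2)) : ℝ := ((1 + ‖z‖) ^ 3)⁻¹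

noncomputable def latt (n : ℤ × ℤ) : EuclideanSpace ℝ (Fin 2) :=
  (WithLp.equiv 2 (Fin 2 → ℝ)).symm ![(n.1 : ℝ), (n.2 : ℝ)]

lemma latt_apply (n : ℤ × ℤ) : latt n = (WithLp.equiv 2 (Fin 2 → ℝ)).symm ![(n.1 : ℝ), (n.2 : ℝ)] := rfl

lemma latt_sub (a b : ℤ × ℤ) : latt a - latt b = latt (a - b) := by
  ext i
  fin_cases i <;> simp [latt] <;> push_cast <;> ring

lemma latt_norm (n : ℤ × ℤ) : ‖latt n‖ = Real.sqrt ((n.1:ℝ)^2 + (n.2:ℝ)^2) := by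
  rw [EuclideanSpace.norm_eq]
  simp [latt, Fin.sum_univ_two, Real.norm_eq_abs, sq_abs]

lemma latt_norm_ge₁ (n : ℤ × ℤ) : |(n.1:ℝ)| ≤ ‖latt n‖ := by
  rw [latt_norm]
  rw [show |(n.1:ℝ)| = Real.sqrt ((n.1:ℝ)^2) by rw [Real.sqrt_sq_eq_abs]]
  apply Real.sqrt_le_sqrt; nlinarith [sq_nonneg ((n.2:ℝ))]

lemma latt_norm_ge₂ (n : ℤ × ℤ) : |(n.2:ℝ)| ≤ ‖latt n‖ := by
  rw [latt_norm]
  rw [show |(n.2:ℝ)| = Real.sqrt ((n.2:ℝ)^2) by rw [Real.sqrt_sq_eq_abs]]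
  apply Real.sqrt_le_sqrt; nlinarith [sq_nonneg ((n.1:ℝ))]

lemma latt_norm_pos {n : ℤ × ℤ} (hn : n ≠ 0) : 0 < ‖latt n‖ := by
  rcases Prod.mk.injEq .. ▸ (fun h => hn h) with _
  by_cases h1 : n.1 = 0
  · have h2 : n.2 ≠ 0 := by
      intro h2; exact hn (Prod.ext h1 h2)
    calc (0:ℝ) < |(n.2:ℝ)| := by simpa using h2
      _ ≤ _ := latt_norm_ge₂ n
  · calc (0:ℝ) < |(n.1:ℝ)| := by simpa using h1
      _ ≤ _ := latt_norm_ge₁ n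

lemma summable_latt : Summable (fun n : ℤ × ℤ => (‖latt n‖ ^ 3)⁻¹) := by
  have h := EisensteinSeries.summable_one_div_norm_rpow (k := 3) (by norm_num)
  have h2 : Summable (fun n : ℤ × ℤ => ‖(![n.1, n.2] : Fin 2 → ℤ)‖ ^ (-(3:ℝ))) := by
    have := ((finTwoArrowEquiv ℤ).symm.summable_iff (f := fun x : Fin 2 → ℤ => ‖x‖ ^ (-(3:ℝ)))).mpr h
    simpa [finTwoArrowEquiv, Function.comp_def] using this
  apply Summable.of_nonneg_of_le (fun n => by positivity) _ h2
  intro n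
  rcases eq_or_ne n 0 with rfl | hn
  · simp [latt_norm, Real.zero_rpow (by norm_num : (-(3:ℝ)) ≠ 0), EisensteinSeries.norm_eq_max_natAbs]
  · have hpos : 0 < ‖latt n‖ := latt_norm_pos hn
    have hx : (0:ℝ) < ‖(![n.1, n.2] : Fin 2 → ℤ)‖ := by
      rw [norm_pos_iff]
      intro h
      apply hn
      have h1 := congrFun h 0
      have h2 := congrFun h 1
      simp at h1 h2
      exact Prod.ext h1 h2
    rw [Real.rpow_neg (le_of_lt hx), show ((3:ℝ)) = ((3:ℕ):ℝ) by norm_num, Real.rpow_natCast]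
    apply inv_anti₀ (by positivity)
    have hle : ‖(![n.1, n.2] : Fin 2 → ℤ)‖ ≤ ‖latt n‖ := by
      rw [EisensteinSeries.norm_eq_max_natAbs]
      simp only [Matrix.cons_val_zero, Matrix.cons_val_one, Matrix.head_cons]
      rw [Nat.cast_max]
      apply max_le
      · rw [Nat.cast_natAbs]; exact_mod_cast latt_norm_ge₁ n
      · rw [Nat.cast_natAbs]; exact_mod_cast latt_norm_ge₂ n
    gcongr
lemma theta_nonneg (z : EuclideanSpace ℝ (Fin 2)) : 0 ≤ theta z := by
  unfold theta; positivity

lemma theta_le_one (z : EuclideanSpace ℝ (Fin 2)) : theta z ≤ 1 := by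
  unfold theta
  have h : (1:ℝ) ≤ (1 + ‖z‖) ^ 3 := one_le_pow₀ (by linarith [norm_nonneg z])
  rw [inv_le_one_iff₀]
  right
  exact h

lemma theta_symm (x y : EuclideanSpace ℝ (Fin 2)) : theta (x - y) = theta (y - x) := by
  unfold theta; rw [norm_sub_rev]

private lemma aux0 (u v w : ℝ) (hu : 1 ≤ u) (hv : 1 ≤ v) (hw : 0 < w) (h : w ≤ u + v)
    (huv : u ≤ v) :
    (u ^ 3)⁻¹ * (v ^ 3)⁻¹ ≤ 8 * (w ^ 3)⁻¹ * ((u ^ 3)⁻¹ + (v ^ 3)⁻¹) := by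
  have h2 : w ≤ 2 * v := by linarith
  have h3 : ((2 * v) ^ 3)⁻¹ ≤ (w ^ 3)⁻¹ := by gcongr
  calc (u ^ 3)⁻¹ * (v ^ 3)⁻¹ = 8 * ((2 * v) ^ 3)⁻¹ * (u ^ 3)⁻¹ := by
        rw [mul_pow]
        rw [mul_inv]
        norm_num
        ring
    _ ≤ 8 * (w ^ 3)⁻¹ * (u ^ 3)⁻¹ := by gcongr
    _ ≤ 8 * (w ^ 3)⁻¹ * ((u ^ 3)⁻¹ + (v ^ 3)⁻¹) := by
        have : (0:ℝ) ≤ (v ^ 3)⁻¹ := by positivity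
        have h8 : (0:ℝ) ≤ 8 * (w ^ 3)⁻¹ := by positivity
        nlinarith
  
lemma theta_tri (a b c : EuclideanSpace ℝ (Fin 2)) :
    theta (a - b) * theta (c - b) ≤ 8 * theta (a - c) * (theta (a - b) + theta (c - b)) := by
  have key : ‖a - c‖ ≤ ‖a - b‖ + ‖c - b‖ := by
    have : a - c = (a - b) - (c - b) := by abel
    rw [this]
    exact norm_sub_le _ _
  unfold theta
  set u := 1 + ‖a - b‖ with hu'
  set v := 1 + ‖c - b‖ with hv'
  set w := 1 + ‖a - c‖ with hw'
  have hu : 1 ≤ u := by have := norm_nonneg (a - b); linarith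
  have hv : 1 ≤ v := by have := norm_nonneg (c - b); linarith
  have hw : 0 < w := by have := norm_nonneg (a - c); linarith
  have h : w ≤ u + v := by simp only [hu', hv', hw']; linarith
  rcases le_total u v with h' | h'
  · exact aux0 u v w hu hv hw h h'
  · have := aux0 v u w hv hu hw (by linarith) h'
    calc (u ^ 3)⁻¹ * (v ^ 3)⁻¹ = (v ^ 3)⁻¹ * (u ^ 3)⁻¹ := by ring
      _ ≤ 8 * (w ^ 3)⁻¹ * ((v ^ 3)⁻¹ + (u ^ 3)⁻¹) := this
      _ = 8 * (w ^ 3)⁻¹ * ((u ^ 3)⁻¹ + (v ^ 3)⁻¹) := by ring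

open scoped ENNReal

noncomputable def K₀ : ℝ := (∑' n : ℤ × ℤ, (‖latt n‖ ^ 3)⁻¹) + 1

lemma one_le_K₀ : 1 ≤ K₀ := by
  have : 0 ≤ ∑' n : ℤ × ℤ, (‖latt n‖ ^ 3)⁻¹ := tsum_nonneg fun n => by positivity
  unfold K₀; linarith

lemma K₀_pos : 0 < K₀ := lt_of_lt_of_le one_pos one_le_K₀

lemma tsum_ofReal_toReal {α : Type*} (r : α → ℝ) (h : ∀ a, 0 ≤ r a) :
    (∑' a, ENNReal.ofReal (r a)).toReal = ∑' a, r a := by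
  rw [ENNReal.tsum_toReal_eq (fun a => ENNReal.ofReal_ne_top)]
  exact tsum_congr fun a => ENNReal.toReal_ofReal (h a)

lemma ofReal_tsum_le {α : Type*} (r : α → ℝ) (h : ∀ a, 0 ≤ r a) :
    ENNReal.ofReal (∑' a, r a) ≤ ∑' a, ENNReal.ofReal (r a) := by
  by_cases hs : Summable r
  · rw [ENNReal.ofReal_tsum_of_nonneg h hs]
  · rw [tsum_eq_zero_of_not_summable hs]; simp

lemma row_bound {L : ℝ} (hL : 1 ≤ L) (Ξ : Set (ℤ × ℤ)) (j : ℤ × ℤ) :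
    ∑' i : Ξ, (if (i : ℤ × ℤ) ≠ j then ENNReal.ofReal (theta (L • latt i - L • latt j)) else 0)
      ≤ ENNReal.ofReal (K₀ / L ^ 3) := by
  have hL0 : (0:ℝ) < L := lt_of_lt_of_le one_pos hL
  set G : ℤ × ℤ → ℝ≥0∞ := fun n => ENNReal.ofReal (L⁻¹ ^ 3 * (‖latt n‖ ^ 3)⁻¹) with hG
  have hpt : ∀ i : Ξ,
      (if (i : ℤ × ℤ) ≠ j then ENNReal.ofReal (theta (L • latt i - L • latt j)) else 0)
        ≤ G ((i : ℤ × ℤ) - j) := by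
    intro i
    split
    · next hij =>
      have hm : (i : ℤ × ℤ) - j ≠ 0 := sub_ne_zero.mpr hij
      have hnorm : 0 < ‖latt ((i : ℤ × ℤ) - j)‖ := latt_norm_pos hm
      have heq : L • latt (i : ℤ × ℤ) - L • latt j = L • latt ((i : ℤ × ℤ) - j) := by
        rw [← smul_sub, latt_sub]
      rw [heq]
      apply ENNReal.ofReal_le_ofReal
      unfold theta
      rw [norm_smul, Real.norm_eq_abs, abs_of_pos hL0]
      have h1 : (L * ‖latt ((i : ℤ × ℤ) - j)‖) ^ 3 ≤ (1 + L * ‖latt ((i : ℤ × ℤ) - j)‖) ^ 3 := by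
        gcongr
        · linarith [mul_nonneg hL0.le hnorm.le]
      calc ((1 + L * ‖latt ((i : ℤ × ℤ) - j)‖) ^ 3)⁻¹
          ≤ ((L * ‖latt ((i : ℤ × ℤ) - j)‖) ^ 3)⁻¹ := by
            apply inv_anti₀ (by positivity) h1
        _ = L⁻¹ ^ 3 * (‖latt ((i : ℤ × ℤ) - j)‖ ^ 3)⁻¹ := by
            rw [mul_pow, mul_inv, inv_pow]
    · exact zero_le
  calc ∑' i : Ξ, (if (i : ℤ × ℤ) ≠ j then ENNReal.ofReal (theta (L • latt i - L • latt j)) else 0)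
      ≤ ∑' i : Ξ, G ((i : ℤ × ℤ) - j) := ENNReal.tsum_le_tsum hpt
    _ ≤ ∑' n : ℤ × ℤ, G n := by
        apply ENNReal.tsum_comp_le_tsum_of_injective
        intro x y hxy
        have : (x : ℤ × ℤ) = (y : ℤ × ℤ) := by
          have := sub_left_injective hxy
          exact this
        exact Subtype.ext this
    _ = ENNReal.ofReal (∑' n : ℤ × ℤ, L⁻¹ ^ 3 * (‖latt n‖ ^ 3)⁻¹) := by
        rw [ENNReal.ofReal_tsum_of_nonneg (fun n => by positivity) (summable_latt.mul_left _)]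
    _ ≤ ENNReal.ofReal (K₀ / L ^ 3) := by
        apply ENNReal.ofReal_le_ofReal
        rw [tsum_mul_left, div_eq_mul_inv, mul_comm K₀, inv_pow]
        gcongr
        · have : 0 ≤ ∑' n : ℤ × ℤ, (‖latt n‖ ^ 3)⁻¹ := tsum_nonneg fun n => by positivity
          unfold K₀; linarith

lemma diag_bound (Ξ : Set (ℤ × ℤ)) (j : ℤ × ℤ) (u : Ξ → ℝ≥0∞) (hu : ∀ i, u i ≤ 1) :
    ∑' i : Ξ, (if (i : ℤ × ℤ) = j then u i else 0) ≤ 1 := by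
  calc ∑' i : Ξ, (if (i : ℤ × ℤ) = j then u i else 0)
      ≤ ∑' i : Ξ, (fun n : ℤ × ℤ => if n = j then (1:ℝ≥0∞) else 0) (i : ℤ × ℤ) := by
        apply ENNReal.tsum_le_tsum
        intro i
        dsimp only
        split
        · exact hu i
        · exact le_refl _
    _ ≤ ∑' n : ℤ × ℤ, (if n = j then (1:ℝ≥0∞) else 0) :=
        ENNReal.tsum_comp_le_tsum_of_injective Subtype.val_injective _
    _ = 1 := tsum_ite_eq j 1

lemma full_row_bound {L : ℝ} (hL : 1 ≤ L) (hK : K₀ ≤ L ^ 3) (Ξ : Set (ℤ × ℤ)) (j : ℤ × ℤ) :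
    ∑' i : Ξ, ENNReal.ofReal (theta (L • latt i - L • latt j)) ≤ 2 := by
  have hsplit : ∀ i : Ξ, ENNReal.ofReal (theta (L • latt i - L • latt j))
      = (if (i : ℤ × ℤ) ≠ j then ENNReal.ofReal (theta (L • latt i - L • latt j)) else 0)
        + (if (i : ℤ × ℤ) = j then ENNReal.ofReal (theta (L • latt i - L • latt j)) else 0) := by
    intro i
    by_cases h : (i : ℤ × ℤ) = j <;> simp [h]
  rw [tsum_congr hsplit, ENNReal.tsum_add]
  have h1 := row_bound hL Ξ j
  have h2 := diag_bound Ξ j (fun i => ENNReal.ofReal (theta (L • latt i - L • latt j)))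
    (fun i => by rw [← ENNReal.ofReal_one]; exact ENNReal.ofReal_le_ofReal (theta_le_one _))
  have h3 : ENNReal.ofReal (K₀ / L ^ 3) ≤ 1 := by
    rw [ENNReal.ofReal_le_one]
    rw [div_le_one (by positivity)]
    exact hK
  calc _ ≤ ENNReal.ofReal (K₀ / L ^ 3) + 1 := add_le_add h1 h2
    _ ≤ 1 + 1 := by exact add_le_add_left h3 1
    _ = 2 := one_add_one_eq_two

lemma M_bound_abstract {α : Type*} (f : α → ℝ≥0∞) (t : α → α → ℝ≥0∞)
    (hfull : ∀ i, (∑' k, t i k) ≤ 2) (hfullc : ∀ k, (∑' i, t i k) ≤ 2) :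
    (∑' i, ∑' k, f i * f k * t i k) ≤ 4 * ∑' i, f i ^ 2 := by
  have hmul_self : ∀ a b : ℝ≥0∞, a * b ≤ a ^ 2 + b ^ 2 := by
    intro a b
    rcases le_total a b with h | h
    · calc a * b ≤ b * b := mul_le_mul_left h b
        _ = b ^ 2 := (sq b).symm
        _ ≤ a ^ 2 + b ^ 2 := le_add_self
    · calc a * b ≤ a * a := mul_le_mul_right h a
        _ = a ^ 2 := (sq a).symm
        _ ≤ a ^ 2 + b ^ 2 := le_self_add
  have hA : (∑' i, ∑' k, f i ^ 2 * t i k) ≤ 2 * ∑' i, f i ^ 2 := by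
    calc (∑' i, ∑' k, f i ^ 2 * t i k) = ∑' i, f i ^ 2 * ∑' k, t i k :=
          tsum_congr fun i => ENNReal.tsum_mul_left
      _ ≤ ∑' i, f i ^ 2 * 2 := ENNReal.tsum_le_tsum fun i => mul_le_mul_right (hfull i) _
      _ = 2 * ∑' i, f i ^ 2 := by
          rw [← ENNReal.tsum_mul_left]
          exact tsum_congr fun i => mul_comm _ _
  have hB : (∑' i, ∑' k, f k ^ 2 * t i k) ≤ 2 * ∑' k, f k ^ 2 := by
    rw [ENNReal.tsum_comm]
    calc (∑' k, ∑' i, f k ^ 2 * t i k) = ∑' k, f k ^ 2 * ∑' i, t i k :=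
          tsum_congr fun k => ENNReal.tsum_mul_left
      _ ≤ ∑' k, f k ^ 2 * 2 := ENNReal.tsum_le_tsum fun k => mul_le_mul_right (hfullc k) _
      _ = 2 * ∑' k, f k ^ 2 := by
          rw [← ENNReal.tsum_mul_left]
          exact tsum_congr fun k => mul_comm _ _
  calc (∑' i, ∑' k, f i * f k * t i k)
      ≤ ∑' i, ∑' k, (f i ^ 2 * t i k + f k ^ 2 * t i k) := by
        apply ENNReal.tsum_le_tsum
        intro i
        apply ENNReal.tsum_le_tsum
        intro k
        calc f i * f k * t i k ≤ (f i ^ 2 + f k ^ 2) * t i k :=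
              mul_le_mul_left (hmul_self _ _) _
          _ = f i ^ 2 * t i k + f k ^ 2 * t i k := add_mul _ _ _
    _ = (∑' i, ∑' k, f i ^ 2 * t i k) + (∑' i, ∑' k, f k ^ 2 * t i k) := by
        rw [← ENNReal.tsum_add]
        exact tsum_congr fun i => ENNReal.tsum_add
    _ ≤ 2 * (∑' i, f i ^ 2) + 2 * (∑' k, f k ^ 2) := add_le_add hA hB
    _ = 4 * ∑' i, f i ^ 2 := by ring

lemma main_enn_abstract {α : Type*} (f : α → ℝ≥0∞) (t : α → α → ℝ≥0∞) (P : α → α → Prop)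
    [∀ i j, Decidable (P i j)] (B : ℝ≥0∞)
    (hcol : ∀ i, (∑' j, if P i j then t i j else 0) ≤ B)
    (httri : ∀ i k j, t i j * t k j ≤ 8 * t i k * (t i j + t k j)) :
    (∑' j, (∑' i, if P i j then f i * t i j else 0) ^ 2)
      ≤ 16 * B * ∑' i, ∑' k, f i * f k * t i k := by
  set s : α → α → ℝ≥0∞ := fun i j => if P i j then f i * t i j else 0 with hsdef
  have sq_eq : ∀ j, (∑' i, s i j) ^ 2 = ∑' i, ∑' k, s i j * s k j := by
    intro j
    rw [sq, ← ENNReal.tsum_mul_right]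
    exact tsum_congr fun i => ENNReal.tsum_mul_left.symm
  have inner : ∀ i k, (∑' j, s i j * s k j) ≤ 16 * B * (f i * f k * t i k) := by
    intro i k
    have hpt : ∀ j, s i j * s k j
        ≤ 8 * (f i * f k * t i k) * ((if P i j then t i j else 0)
            + (if P k j then t k j else 0)) := by
      intro j
      by_cases hij : P i j
      · by_cases hkj : P k j
        · rw [hsdef]
          simp only [if_pos hij, if_pos hkj]
          calc (f i * t i j) * (f k * t k j) = (f i * f k) * (t i j * t k j) := by ring
            _ ≤ (f i * f k) * (8 * t i k * (t i j + t k j)) := mul_le_mul_right (httri i k j) _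
            _ = 8 * (f i * f k * t i k) * (t i j + t k j) := by ring
        · rw [hsdef]
          simp only [if_neg hkj, mul_zero]
          exact zero_le
      · rw [hsdef]
        simp only [if_neg hij, zero_mul]
        exact zero_le
    calc (∑' j, s i j * s k j)
        ≤ ∑' j, 8 * (f i * f k * t i k) * ((if P i j then t i j else 0)
            + (if P k j then t k j else 0)) := ENNReal.tsum_le_tsum hpt
      _ = 8 * (f i * f k * t i k) * ∑' j, ((if P i j then t i j else 0)
            + (if P k j then t k j else 0)) := ENNReal.tsum_mul_left
      _ = 8 * (f i * f k * t i k) * ((∑' j, if P i j then t i j else 0)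
            + (∑' j, if P k j then t k j else 0)) := by rw [ENNReal.tsum_add]
      _ ≤ 8 * (f i * f k * t i k) * (B + B) :=
          mul_le_mul_right (add_le_add (hcol i) (hcol k)) _
      _ = 16 * B * (f i * f k * t i k) := by ring
  calc (∑' j, (∑' i, s i j) ^ 2)
      = ∑' j, ∑' i, ∑' k, s i j * s k j := tsum_congr sq_eq
    _ = ∑' i, ∑' k, ∑' j, s i j * s k j := by
        rw [ENNReal.tsum_comm (f := fun j i => ∑' k, s i j * s k j)]
        exact tsum_congr fun i => ENNReal.tsum_comm
    _ ≤ ∑' i, ∑' k, 16 * B * (f i * f k * t i k) :=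
        ENNReal.tsum_le_tsum fun i => ENNReal.tsum_le_tsum fun k => inner i k
    _ = 16 * B * ∑' i, ∑' k, f i * f k * t i k := by
        rw [← ENNReal.tsum_mul_left]
        exact tsum_congr fun i => ENNReal.tsum_mul_left

lemma hfull_conc {L : ℝ} (hL : 1 ≤ L) (hK : K₀ ≤ L ^ 3) (Ξ : Set (ℤ × ℤ)) (i : Ξ) :
    (∑' k : Ξ, ENNReal.ofReal (theta (L • latt (i:ℤ×ℤ) - L • latt (k:ℤ×ℤ)))) ≤ 2 := by
  have he : ∀ k : Ξ, ENNReal.ofReal (theta (L • latt (i:ℤ×ℤ) - L • latt (k:ℤ×ℤ)))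
      = ENNReal.ofReal (theta (L • latt (k:ℤ×ℤ) - L • latt ((i:ℤ×ℤ)))) :=
    fun k => congrArg _ (theta_symm _ _)
  rw [tsum_congr he]
  exact full_row_bound hL hK Ξ i

lemma hcol_conc {L : ℝ} (hL : 1 ≤ L) (Ξ : Set (ℤ × ℤ)) (i : Ξ) :
    (∑' j : Ξ, if (i:ℤ×ℤ) ≠ (j:ℤ×ℤ) then
        ENNReal.ofReal (theta (L • latt (i:ℤ×ℤ) - L • latt (j:ℤ×ℤ))) else 0)
      ≤ ENNReal.ofReal (K₀ / L ^ 3) := by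
  have he : ∀ j : Ξ, (if (i:ℤ×ℤ) ≠ (j:ℤ×ℤ) then
        ENNReal.ofReal (theta (L • latt (i:ℤ×ℤ) - L • latt (j:ℤ×ℤ))) else 0)
      = (if (j:ℤ×ℤ) ≠ (i:ℤ×ℤ) then
        ENNReal.ofReal (theta (L • latt (j:ℤ×ℤ) - L • latt (i:ℤ×ℤ))) else 0) :=
    fun j => if_congr ne_comm (congrArg _ (theta_symm _ _)) rfl
  rw [tsum_congr he]
  exact row_bound hL Ξ i

lemma ttri_conc (L : ℝ) (Ξ : Set (ℤ × ℤ)) (i k j : Ξ) :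
    ENNReal.ofReal (theta (L • latt (i:ℤ×ℤ) - L • latt (j:ℤ×ℤ)))
        * ENNReal.ofReal (theta (L • latt (k:ℤ×ℤ) - L • latt (j:ℤ×ℤ)))
      ≤ 8 * ENNReal.ofReal (theta (L • latt (i:ℤ×ℤ) - L • latt (k:ℤ×ℤ)))
        * (ENNReal.ofReal (theta (L • latt (i:ℤ×ℤ) - L • latt (j:ℤ×ℤ)))
          + ENNReal.ofReal (theta (L • latt (k:ℤ×ℤ) - L • latt (j:ℤ×ℤ)))) := by
  have h := theta_tri (L • latt (i:ℤ×ℤ)) (L • latt (j:ℤ×ℤ)) (L • latt (k:ℤ×ℤ))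
  calc ENNReal.ofReal (theta (L • latt (i:ℤ×ℤ) - L • latt (j:ℤ×ℤ)))
        * ENNReal.ofReal (theta (L • latt (k:ℤ×ℤ) - L • latt (j:ℤ×ℤ)))
      = ENNReal.ofReal (theta (L • latt (i:ℤ×ℤ) - L • latt (j:ℤ×ℤ)) *
          theta (L • latt (k:ℤ×ℤ) - L • latt (j:ℤ×ℤ))) :=
        (ENNReal.ofReal_mul (theta_nonneg _)).symm
    _ ≤ ENNReal.ofReal (8 * theta (L • latt (i:ℤ×ℤ) - L • latt (k:ℤ×ℤ)) *
          (theta (L • latt (i:ℤ×ℤ) - L • latt (j:ℤ×ℤ)) +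
            theta (L • latt (k:ℤ×ℤ) - L • latt (j:ℤ×ℤ)))) := ENNReal.ofReal_le_ofReal h
    _ = _ := by
        rw [ENNReal.ofReal_mul (mul_nonneg (by norm_num) (theta_nonneg _)),
          ENNReal.ofReal_mul (by norm_num : (0:ℝ) ≤ 8),
          ENNReal.ofReal_add (theta_nonneg _) (theta_nonneg _), ENNReal.ofReal_ofNat]

theorem lattice_offdiagonal_square_sum_bound :
    ∃ C > (0 : ℝ), ∃ C' > (0 : ℝ), ∃ L₀ > (0 : ℝ), ∀ L ≥ L₀,
      ∀ (Ξ : Set (ℤ × ℤ)) (g : ℤ × ℤ → ℝ),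
        (∀ i, 0 ≤ g i) → Summable (fun i : Ξ => (g i) ^ 2) →
        (∑' j : Ξ, (∑' i : Ξ, if (i : ℤ × ℤ) ≠ (j : ℤ × ℤ) then
              g i * theta (L • latt i - L • latt j) else 0) ^ 2) ≤
            C / L ^ 3 * ∑' i : Ξ, ∑' k : Ξ,
              g i * g k * theta (L • latt i - L • latt k) ∧
          C / L ^ 3 * (∑' i : Ξ, ∑' k : Ξ,
              g i * g k * theta (L • latt i - L • latt k)) ≤
            C' / L ^ 3 * ∑' i : Ξ, (g i) ^ 2 := by
  refine ⟨16 * K₀, by linarith [K₀_pos], 64 * K₀, by linarith [K₀_pos], 1 + K₀,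
    by linarith [K₀_pos], ?_⟩
  intro L hL Ξ g hg hsum
  have hL1 : (1:ℝ) ≤ L := by linarith [K₀_pos]
  have hL0 : (0:ℝ) < L := by linarith
  have hL3 : L ≤ L ^ 3 := by nlinarith [sq_nonneg L, sq_nonneg (L-1), sq_nonneg (L+1)]
  have hK : K₀ ≤ L ^ 3 := by linarith [one_le_K₀]
  have hM4 := M_bound_abstract (fun i : Ξ => ENNReal.ofReal (g i))
    (fun i k : Ξ => ENNReal.ofReal (theta (L • latt (i:ℤ×ℤ) - L • latt (k:ℤ×ℤ))))
    (hfull_conc hL1 hK Ξ) (fun k => full_row_bound hL1 hK Ξ k)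
  have hmain := main_enn_abstract (fun i : Ξ => ENNReal.ofReal (g i))
    (fun i k : Ξ => ENNReal.ofReal (theta (L • latt (i:ℤ×ℤ) - L • latt (k:ℤ×ℤ))))
    (fun i j : Ξ => (i:ℤ×ℤ) ≠ (j:ℤ×ℤ)) (ENNReal.ofReal (K₀ / L ^ 3))
    (hcol_conc hL1 Ξ) (ttri_conc L Ξ)
  have hFsq : (∑' i : Ξ, (ENNReal.ofReal (g (i:ℤ×ℤ))) ^ 2)
      = ENNReal.ofReal (∑' i : Ξ, g (i:ℤ×ℤ) ^ 2) := by
    rw [ENNReal.ofReal_tsum_of_nonneg (fun i => sq_nonneg _) hsum]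
    exact tsum_congr fun i => (ENNReal.ofReal_pow (hg _) 2).symm
  have hMne : (∑' i : Ξ, ∑' k : Ξ, ENNReal.ofReal (g (i:ℤ×ℤ)) * ENNReal.ofReal (g (k:ℤ×ℤ))
      * ENNReal.ofReal (theta (L • latt (i:ℤ×ℤ) - L • latt (k:ℤ×ℤ)))) ≠ ⊤ := by
    refine (lt_of_le_of_lt hM4 ?_).ne
    rw [hFsq]
    exact ENNReal.mul_lt_top (by simp) ENNReal.ofReal_lt_top
  have hms : ∀ i k : Ξ, ENNReal.ofReal (g (i:ℤ×ℤ) * g (k:ℤ×ℤ)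
        * theta (L • latt (i:ℤ×ℤ) - L • latt (k:ℤ×ℤ)))
      = ENNReal.ofReal (g (i:ℤ×ℤ)) * ENNReal.ofReal (g (k:ℤ×ℤ))
        * ENNReal.ofReal (theta (L • latt (i:ℤ×ℤ) - L • latt (k:ℤ×ℤ))) := by
    intro i k
    rw [ENNReal.ofReal_mul (mul_nonneg (hg _) (hg _)), ENNReal.ofReal_mul (hg _)]
  have hMtoReal : (∑' i : Ξ, ∑' k : Ξ, ENNReal.ofReal (g (i:ℤ×ℤ)) * ENNReal.ofReal (g (k:ℤ×ℤ))
        * ENNReal.ofReal (theta (L • latt (i:ℤ×ℤ) - L • latt (k:ℤ×ℤ)))).toReal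
      = ∑' i : Ξ, ∑' k : Ξ, g (i:ℤ×ℤ) * g (k:ℤ×ℤ)
        * theta (L • latt (i:ℤ×ℤ) - L • latt (k:ℤ×ℤ)) := by
    rw [ENNReal.tsum_toReal_eq (fun i => ne_top_of_le_ne_top hMne (ENNReal.le_tsum i))]
    refine tsum_congr fun i => ?_
    rw [tsum_congr (fun k => (hms i k).symm)]
    exact tsum_ofReal_toReal _ fun k => mul_nonneg (mul_nonneg (hg _) (hg _)) (theta_nonneg _)
  have hr : ∀ i j : Ξ, 0 ≤ (if (i:ℤ×ℤ) ≠ (j:ℤ×ℤ) then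
      g (i:ℤ×ℤ) * theta (L • latt (i:ℤ×ℤ) - L • latt (j:ℤ×ℤ)) else 0) := by
    intro i j
    split
    · exact mul_nonneg (hg _) (theta_nonneg _)
    · exact le_refl 0
  have hsr : ∀ i j : Ξ, ENNReal.ofReal (if (i:ℤ×ℤ) ≠ (j:ℤ×ℤ) then
        g (i:ℤ×ℤ) * theta (L • latt (i:ℤ×ℤ) - L • latt (j:ℤ×ℤ)) else 0)
      = (if (i:ℤ×ℤ) ≠ (j:ℤ×ℤ) then ENNReal.ofReal (g (i:ℤ×ℤ))
        * ENNReal.ofReal (theta (L • latt (i:ℤ×ℤ) - L • latt (j:ℤ×ℤ))) else 0) := by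
    intro i j
    split
    · exact ENNReal.ofReal_mul (hg _)
    · exact ENNReal.ofReal_zero
  have hBne : (16 : ℝ≥0∞) * ENNReal.ofReal (K₀ / L ^ 3)
      * (∑' i : Ξ, ∑' k : Ξ, ENNReal.ofReal (g (i:ℤ×ℤ)) * ENNReal.ofReal (g (k:ℤ×ℤ))
        * ENNReal.ofReal (theta (L • latt (i:ℤ×ℤ) - L • latt (k:ℤ×ℤ)))) ≠ ⊤ :=
    ENNReal.mul_ne_top (ENNReal.mul_ne_top (by simp) ENNReal.ofReal_ne_top) hMne
  constructor
  · have step : (∑' j : Ξ, ENNReal.ofReal ((∑' i : Ξ, if (i:ℤ×ℤ) ≠ (j:ℤ×ℤ) then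
        g (i:ℤ×ℤ) * theta (L • latt (i:ℤ×ℤ) - L • latt (j:ℤ×ℤ)) else 0) ^ 2))
        ≤ ∑' j : Ξ, (∑' i : Ξ, if (i:ℤ×ℤ) ≠ (j:ℤ×ℤ) then ENNReal.ofReal (g (i:ℤ×ℤ))
          * ENNReal.ofReal (theta (L • latt (i:ℤ×ℤ) - L • latt (j:ℤ×ℤ))) else 0) ^ 2 := by
      apply ENNReal.tsum_le_tsum
      intro j
      rw [ENNReal.ofReal_pow (tsum_nonneg (fun i => hr i j))]
      rw [← tsum_congr (fun i => hsr i j)]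
      exact pow_le_pow_left' (ofReal_tsum_le _ (fun i => hr i j)) 2
    calc (∑' j : Ξ, (∑' i : Ξ, if (i:ℤ×ℤ) ≠ (j:ℤ×ℤ) then
          g (i:ℤ×ℤ) * theta (L • latt (i:ℤ×ℤ) - L • latt (j:ℤ×ℤ)) else 0) ^ 2)
        = (∑' j : Ξ, ENNReal.ofReal ((∑' i : Ξ, if (i:ℤ×ℤ) ≠ (j:ℤ×ℤ) then
            g (i:ℤ×ℤ) * theta (L • latt (i:ℤ×ℤ) - L • latt (j:ℤ×ℤ)) else 0) ^ 2)).toReal :=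
          (tsum_ofReal_toReal _ (fun j => sq_nonneg _)).symm
      _ ≤ ((16 : ℝ≥0∞) * ENNReal.ofReal (K₀ / L ^ 3)
          * (∑' i : Ξ, ∑' k : Ξ, ENNReal.ofReal (g (i:ℤ×ℤ)) * ENNReal.ofReal (g (k:ℤ×ℤ))
            * ENNReal.ofReal (theta (L • latt (i:ℤ×ℤ) - L • latt (k:ℤ×ℤ))))).toReal :=
          ENNReal.toReal_mono hBne (le_trans step hmain)
      _ = 16 * (K₀ / L ^ 3) * ∑' i : Ξ, ∑' k : Ξ, g (i:ℤ×ℤ) * g (k:ℤ×ℤ)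
            * theta (L • latt (i:ℤ×ℤ) - L • latt (k:ℤ×ℤ)) := by
          rw [ENNReal.toReal_mul, ENNReal.toReal_mul, ENNReal.toReal_ofNat,
            ENNReal.toReal_ofReal (div_nonneg (by linarith [K₀_pos]) (by positivity)), hMtoReal]
      _ = 16 * K₀ / L ^ 3 * ∑' i : Ξ, ∑' k : Ξ, g (i:ℤ×ℤ) * g (k:ℤ×ℤ)
            * theta (L • latt (i:ℤ×ℤ) - L • latt (k:ℤ×ℤ)) := by rw [mul_div_assoc]
  · have hMr : (∑' i : Ξ, ∑' k : Ξ, g (i:ℤ×ℤ) * g (k:ℤ×ℤ)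
        * theta (L • latt (i:ℤ×ℤ) - L • latt (k:ℤ×ℤ))) ≤ 4 * ∑' i : Ξ, g (i:ℤ×ℤ) ^ 2 := by
      have h4 : ((4:ℝ≥0∞) * ∑' i : Ξ, (ENNReal.ofReal (g (i:ℤ×ℤ))) ^ 2) ≠ ⊤ := by
        rw [hFsq]
        exact ENNReal.mul_ne_top (by simp) ENNReal.ofReal_ne_top
      have h5 := ENNReal.toReal_mono h4 hM4
      rwa [ENNReal.toReal_mul, hFsq, ENNReal.toReal_ofReal (tsum_nonneg fun i => sq_nonneg _),
        ENNReal.toReal_ofNat, hMtoReal] at h5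
    have hc : (0:ℝ) ≤ 16 * K₀ / L ^ 3 := div_nonneg (by linarith [K₀_pos]) (by positivity)
    calc 16 * K₀ / L ^ 3 * (∑' i : Ξ, ∑' k : Ξ, g (i:ℤ×ℤ) * g (k:ℤ×ℤ)
          * theta (L • latt (i:ℤ×ℤ) - L • latt (k:ℤ×ℤ)))
        ≤ 16 * K₀ / L ^ 3 * (4 * ∑' i : Ξ, g (i:ℤ×ℤ) ^ 2) := mul_le_mul_of_nonneg_left hMr hc
      _ = 64 * K₀ / L ^ 3 * ∑' i : Ξ, g (i:ℤ×ℤ) ^ 2 := by ring
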